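/- Let p be prime, F a free pro-p group on x₁, x₂, and r = x₁^p [x₂, x₁^p] ∈ F with R the closed normal subgroup generated by r. Then in the quotient G = F/R the image g₁ of x₁ satisfies g₁^p = 1, and x₁^p ≡ r mod R^p[R,F]; hence x₁^p can be chosen as a defining relator, so G ≅ (Z/p) ∗̂ Z_p is the free pro-p product of a cyclic group of order p and a free pro-p group of rank 1. -/

import Mathlib

/-- A pro-`p` group. -/
def IsProP (p : ℕ) (G : Type) [Group G] [TopologicalSpace G]
    [IsTopologicalGroup G] : Prop :=
  CompactSpace G ∧ T2Space G ∧ TotallyDisconnectedSpace G ∧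
    ∀ U : Subgroup G, U.Normal → IsOpen (U : Set G) → ∃ k : ℕ, U.index = p ^ k

/-- `F` is a free pro-`p` group on the family `x`. -/
def IsFreeProPOn (p : ℕ) (F : Type) [Group F] [TopologicalSpace F]
    [IsTopologicalGroup F] {ι : Type} (x : ι → F) : Prop :=
  IsProP p F ∧
    ∀ (H : Type) (_ : Group H) (_ : TopologicalSpace H) (_ : IsTopologicalGroup H),
      IsProP p H → ∀ h : ι → H,
        ∃! φ : F →* H, Continuous φ ∧ ∀ i, φ (x i) = h i

open scoped commutatorElement

/-- Let `F` be the free pro-`p` group on `x₁, x₂`, `r = x₁^p·[x₂, x₁^p]` and `R` the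
closed normal subgroup generated by `r`.  Then (a) the image of `x₁` in `G = F/R`
satisfies `g₁^p = 1`, i.e. `x₁^p ∈ R`; (b) `x₁^p ≡ r mod R^p[R,F]`; and (c) `x₁^p`
can be chosen as defining relator: the closed normal subgroup generated by `x₁^p`
equals `R` — so that `G` is the free pro-`p` product of a cyclic group of order `p`
(generated by the image of `x₁`) and a free pro-`p` group of rank 1. -/
theorem stmt15 (p : ℕ) (hp : p.Prime) (F : Type) [Group F] [TopologicalSpace F]
    [IsTopologicalGroup F] (x₁ x₂ : F)
    (hF : IsFreeProPOn p F (fun i : Fin 2 => if i = 0 then x₁ else x₂))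
    (r : F) (hr : r = x₁ ^ p * ⁅x₂, x₁ ^ p⁆)
    (R : Subgroup F) (hR : R = (Subgroup.normalClosure {r}).topologicalClosure) :
    x₁ ^ p ∈ R ∧
    x₁ ^ p * r⁻¹ ∈
      (Subgroup.closure ({z : F | ∃ a ∈ R, z = a ^ p} ∪
        {z : F | ∃ a ∈ R, ∃ b : F, z = ⁅a, b⁆})).topologicalClosure ∧
    (Subgroup.normalClosure {x₁ ^ p}).topologicalClosure = R := by
  have hconj : r = (x₁ ^ p * x₂) * x₁ ^ p * (x₁ ^ p * x₂)⁻¹ := by rw [hr]; group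
  have hrmem : r ∈ Subgroup.normalClosure ({r} : Set F) :=
    Subgroup.subset_normalClosure rfl
  have hmemN : x₁ ^ p ∈ Subgroup.normalClosure ({r} : Set F) := by
    have hx : x₁ ^ p = (x₁ ^ p * x₂)⁻¹ * r * ((x₁ ^ p * x₂)⁻¹)⁻¹ := by
      rw [hconj]; group
    rw [hx]
    exact (Subgroup.normalClosure_normal).conj_mem r hrmem _
  have haR : x₁ ^ p ∈ R := by
    rw [hR]; exact Subgroup.le_topologicalClosure _ hmemN
  refine ⟨haR, ?_, ?_⟩
  · have hx : x₁ ^ p * r⁻¹ = ⁅x₁ ^ p, x₁ ^ p * x₂⁆ := by rw [hconj]; group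
    rw [hx]
    exact Subgroup.le_topologicalClosure _
      (Subgroup.subset_closure (Or.inr ⟨x₁ ^ p, haR, x₁ ^ p * x₂, rfl⟩))
  · rw [hR]
    congr 1
    apply le_antisymm
    · exact Subgroup.normalClosure_le_normal (Set.singleton_subset_iff.mpr hmemN)
    · apply Subgroup.normalClosure_le_normal
      rw [Set.singleton_subset_iff]
      show r ∈ Subgroup.normalClosure ({x₁ ^ p} : Set F)
      rw [hconj]
      exact Subgroup.Normal.conj_mem Subgroup.normalClosure_normal (x₁ ^ p)
        (Subgroup.subset_normalClosure (Set.mem_singleton _)) (x₁ ^ p * x₂)
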